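/- Let k be a field of characteristic zero and let d be the k-derivation of k[x,y] given by d = y^{m1} ∂_x + (1 + y^{m2} x) ∂_y, where m1, m2 are positive integers such that m2 does not divide m1. If f ∈ k[x,y] satisfies d(f) = g(x) for some g ∈ k[x], then f ∈ k and g = 0. -/

import Mathlib

open MvPolynomial


lemma scalar_main {k : Type*} [Field k] [CharZero k] (m1 m2 : ℕ) (hm1 : 0 < m1) (hm2 : 0 < m2)
    (hdvd : ¬ m2 ∣ m1) (c : ℕ → ℕ → k) (g : ℕ → k) (N : ℕ)
    (hN : ∀ a e, N ≤ a → c a e = 0)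
    (hstar : ∀ a e : ℕ,
      (if m1 ≤ e then ((a + 1 : ℕ) : k) * c (a+1) (e - m1) else 0)
      + ((e + 1 : ℕ) : k) * c a (e+1)
      + (if 1 ≤ a ∧ m2 ≤ e then ((e - m2 + 1 : ℕ) : k) * c (a-1) (e - m2 + 1) else 0)
      = if e = 0 then g a else 0) :
    (∀ a e, ¬(a = 0 ∧ e = 0) → c a e = 0) ∧ (∀ a, g a = 0) := by
  classical
  have L1 : ∀ A : ℕ, (∀ a e, A < a → c a e = 0) → ∀ E, 1 ≤ E → c A E = 0 := by
    intro A hA E hE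
    have h := hstar (A+1) (E + m2 - 1)
    rw [if_pos (show 1 ≤ A + 1 ∧ m2 ≤ E + m2 - 1 from ⟨by omega, by omega⟩)] at h
    rw [if_neg (show ¬ E + m2 - 1 = 0 by omega)] at h
    have h1 : (if m1 ≤ E + m2 - 1 then ((A + 1 + 1 : ℕ) : k) * c (A+1+1) (E + m2 - 1 - m1) else 0)
        = 0 := by
      split_ifs
      · rw [hA _ _ (by omega), mul_zero]
      · rfl
    rw [h1, hA _ _ (by omega), mul_zero] at h
    rw [show A + 1 - 1 = A by omega, show E + m2 - 1 - m2 + 1 = E by omega] at h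
    rw [zero_add, zero_add] at h
    exact (mul_eq_zero.mp h).resolve_left (Nat.cast_ne_zero.mpr (by omega))
  have hrows : ∀ a, 1 ≤ a → ∀ e, c a e = 0 := by
    by_contra hcon
    push_neg at hcon
    obtain ⟨a₀, ha₀, e₀, hc₀⟩ := hcon
    set P : ℕ → Prop := fun a => ∃ e, c a e ≠ 0 with hP
    have hPa₀ : P a₀ := ⟨e₀, hc₀⟩
    have ha₀N : a₀ ≤ N := by
      by_contra h
      exact hc₀ (hN _ _ (by omega))
    set A := Nat.findGreatest P N with hAdef
    have hPA : P A := Nat.findGreatest_spec ha₀N hPa₀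
    have hA1 : 1 ≤ A := le_trans ha₀ (Nat.le_findGreatest ha₀N hPa₀)
    have htop : ∀ a e, A < a → c a e = 0 := by
      intro a e ha
      by_cases haN : a ≤ N
      · by_contra h
        exact Nat.findGreatest_is_greatest ha haN ⟨e, h⟩
      · exact hN a e (by omega)
    have hrowA : ∀ E, 1 ≤ E → c A E = 0 := L1 A htop
    have hcA : c A 0 ≠ 0 := by
      obtain ⟨eA, hceA⟩ := hPA
      rcases Nat.eq_zero_or_pos eA with h | h
      · rwa [h] at hceA
      · exact absurd (hrowA eA h) hceA
    have hrowA1 : ∀ E, 1 ≤ E → c (A-1) E = 0 := by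
      intro E hE
      have h := hstar A (E + m2 - 1)
      rw [if_pos (show 1 ≤ A ∧ m2 ≤ E + m2 - 1 from ⟨hA1, by omega⟩)] at h
      rw [if_neg (show ¬ E + m2 - 1 = 0 by omega)] at h
      have h1 : (if m1 ≤ E + m2 - 1 then ((A + 1 : ℕ) : k) * c (A+1) (E + m2 - 1 - m1) else 0)
          = 0 := by
        split_ifs
        · rw [htop _ _ (by omega), mul_zero]
        · rfl
      rw [h1, show E + m2 - 1 + 1 = E + m2 by omega, hrowA _ (by omega), mul_zero] at h
      rw [show E + m2 - 1 - m2 + 1 = E by omega] at h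
      rw [zero_add, zero_add] at h
      exact (mul_eq_zero.mp h).resolve_left (Nat.cast_ne_zero.mpr (by omega))
    set t := m1 / m2 with htdef
    set ρ := m1 % m2 with hρdef
    have hρ1 : 1 ≤ ρ := Nat.one_le_iff_ne_zero.mpr (fun h => hdvd (Nat.dvd_of_mod_eq_zero h))
    have hρm2 : ρ < m2 := Nat.mod_lt _ hm2
    have hm1eq : m2 * t + ρ = m1 := Nat.div_add_mod m1 m2
    have hcomm : m2 * t = t * m2 := Nat.mul_comm _ _
    -- base equation at (A-1, m1)
    have hbase := hstar (A-1) m1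
    rw [if_pos (le_refl m1), if_neg (show ¬ m1 = 0 by omega)] at hbase
    rw [show A - 1 + 1 = A by omega, Nat.sub_self, hrowA1 (m1+1) (by omega), mul_zero,
      add_zero] at hbase
    by_cases hAm : 2 ≤ A ∧ m2 ≤ m1
    · -- main case : A ≥ 2 and t ≥ 1
      have ht1 : 1 ≤ t := (Nat.one_le_div_iff hm2).mpr hAm.2
      have hsub1 : (t-1)*m2 + m2 = t*m2 := by
        have h : (t - 1 + 1) * m2 = (t-1)*m2 + m2 := add_one_mul _ _
        rw [show t - 1 + 1 = t by omega] at h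
        omega
      rw [if_pos (show 1 ≤ A - 1 ∧ m2 ≤ m1 from ⟨by omega, hAm.2⟩)] at hbase
      have path : ∀ s, s + 1 ≤ t → s + 2 ≤ A → c (A-2-s) ((t-1-s)*m2+ρ+1) ≠ 0 := by
        intro s
        induction s with
        | zero =>
          intro _ hA2
          rw [show m1 - m2 + 1 = (t-1)*m2+ρ+1 by omega, show A-1-1 = A-2 by omega] at hbase
          intro hzero
          rw [show A-2-0 = A-2 by omega, show t-1-0 = t-1 by omega] at hzero
          rw [hzero, mul_zero, add_zero] at hbase
          exact hcA ((mul_eq_zero.mp hbase).resolve_left (Nat.cast_ne_zero.mpr (by omega)))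
        | succ s ih =>
          intro hst hsA
          have hprev := ih (by omega) (by omega)
          have hsplit : (t-1-s)*m2 = (t-1-(s+1))*m2 + m2 := by
            have h : (t - 1 - (s+1) + 1) * m2 = (t-1-(s+1))*m2 + m2 := add_one_mul _ _
            rw [show t - 1 - (s+1) + 1 = t-1-s by omega] at h
            omega
          have hlt : (t-1-s)*m2 < t*m2 := by
            have := Nat.mul_le_mul_right m2 (show t-1-s ≤ t-1 by omega)
            omega
          have h := hstar (A-2-s) ((t-1-s)*m2+ρ)
          rw [if_neg (show ¬ m1 ≤ (t-1-s)*m2+ρ by omega)] at h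
          rw [if_pos (show 1 ≤ A-2-s ∧ m2 ≤ (t-1-s)*m2+ρ from ⟨by omega, by omega⟩)] at h
          rw [if_neg (show ¬ (t-1-s)*m2+ρ = 0 by omega)] at h
          rw [show (t-1-s)*m2+ρ-m2+1 = (t-1-(s+1))*m2+ρ+1 by omega] at h
          rw [show A-2-s-1 = A-2-(s+1) by omega] at h
          rw [zero_add] at h
          intro hzero
          rw [hzero, mul_zero, add_zero] at h
          exact hprev ((mul_eq_zero.mp h).resolve_left (Nat.cast_ne_zero.mpr (by omega)))
      by_cases hAt : t + 1 ≤ A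
      · -- ending 1 : A ≥ t + 1, contradiction at (A-1-t, ρ)
        have hp := path (t-1) (by omega) (by omega)
        rw [show A-2-(t-1) = A-1-t by omega, show t-1-(t-1) = 0 by omega, Nat.zero_mul,
          Nat.zero_add] at hp
        have h := hstar (A-1-t) ρ
        rw [if_neg (show ¬ m1 ≤ ρ by omega)] at h
        rw [if_neg (show ¬ (1 ≤ A-1-t ∧ m2 ≤ ρ) from fun hr => absurd hr.2 (by omega))] at h
        rw [if_neg (show ¬ ρ = 0 by omega), zero_add, add_zero] at h
        exact hp ((mul_eq_zero.mp h).resolve_left (Nat.cast_ne_zero.mpr (by omega)))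
      · -- ending 2 : 2 ≤ A ≤ t, contradiction at (0, ...)
        have hp := path (A-2) (by omega) (by omega)
        rw [show A-2-(A-2) = 0 by omega] at hp
        have hq1 : 1 ≤ t-1-(A-2) := by omega
        have hlt : (t-1-(A-2))*m2 < t*m2 := by
          have := Nat.mul_le_mul_right m2 (show t-1-(A-2) ≤ t-1 by omega)
          omega
        have h := hstar 0 ((t-1-(A-2))*m2+ρ)
        rw [if_neg (show ¬ m1 ≤ (t-1-(A-2))*m2+ρ by omega)] at h
        rw [if_neg (show ¬ (1 ≤ 0 ∧ m2 ≤ (t-1-(A-2))*m2+ρ) from fun hr => absurd hr.1 (by omega))]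
          at h
        rw [if_neg (show ¬ (t-1-(A-2))*m2+ρ = 0 by omega)] at h
        rw [zero_add, add_zero] at h
        exact hp ((mul_eq_zero.mp h).resolve_left (Nat.cast_ne_zero.mpr (by omega)))
    · -- degenerate case : A = 1 or m2 > m1
      have hcond : ¬ (1 ≤ A - 1 ∧ m2 ≤ m1) := by
        intro hc
        exact hAm ⟨by omega, hc.2⟩
      rw [if_neg hcond, add_zero] at hbase
      exact hcA ((mul_eq_zero.mp hbase).resolve_left (Nat.cast_ne_zero.mpr (by omega)))
  have hrow0 : ∀ E, 1 ≤ E → c 0 E = 0 := L1 0 (fun a e ha => hrows a (by omega) e)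
  have hall : ∀ a e, ¬(a = 0 ∧ e = 0) → c a e = 0 := by
    intro a e hne
    rcases Nat.eq_zero_or_pos a with h | h
    · subst h
      exact hrow0 e (by omega)
    · exact hrows a h e
  refine ⟨hall, fun a => ?_⟩
  have h := hstar a 0
  rw [if_neg (show ¬ m1 ≤ 0 by omega), if_pos rfl] at h
  rw [if_neg (show ¬ (1 ≤ a ∧ m2 ≤ 0) from fun hr => absurd hr.2 (by omega))] at h
  rw [hall a 1 (by omega), mul_zero] at h
  simpa using h.symm


section Helpers

variable {k : Type*} [Field k] [CharZero k]

noncomputable def mon (a e : ℕ) : Fin 2 →₀ ℕ := Finsupp.single 0 a + Finsupp.single 1 e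

lemma mon_apply0 (a e : ℕ) : mon a e 0 = a := by
  simp [mon, Finsupp.single_apply]

lemma mon_apply1 (a e : ℕ) : mon a e 1 = e := by
  simp [mon, Finsupp.single_apply]

lemma mon_add0 (a e : ℕ) : mon a e + Finsupp.single 0 1 = mon (a+1) e := by
  ext j
  fin_cases j <;> simp [mon, Finsupp.single_apply]

lemma mon_add1 (a e : ℕ) : mon a e + Finsupp.single 1 1 = mon a (e+1) := by
  ext j
  fin_cases j <;> simp [mon, Finsupp.single_apply]

lemma mon_sub1 (a e n : ℕ) : mon a e - Finsupp.single 1 n = mon a (e - n) := by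
  ext j
  rw [Finsupp.tsub_apply]
  fin_cases j <;> simp [mon, Finsupp.single_apply]

lemma mon_le1 (a e n : ℕ) : Finsupp.single (1 : Fin 2) n ≤ mon a e ↔ n ≤ e := by
  rw [Finsupp.single_le_iff, mon_apply1]

lemma mon_le2 (a e n : ℕ) :
    Finsupp.single (1 : Fin 2) n + Finsupp.single 0 1 ≤ mon a e ↔ 1 ≤ a ∧ n ≤ e := by
  rw [Finsupp.le_def]
  rw [Fin.forall_fin_two]
  constructor
  · intro ⟨h0, h1⟩
    constructor
    · simpa [mon_apply0, Finsupp.single_apply] using h0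
    · simpa [mon_apply1, Finsupp.single_apply] using h1
  · intro ⟨h0, h1⟩
    constructor
    · simpa [mon_apply0, Finsupp.single_apply] using h0
    · simpa [mon_apply1, Finsupp.single_apply] using h1

lemma mon_sub2 (a e n : ℕ) :
    mon a e - (Finsupp.single (1 : Fin 2) n + Finsupp.single 0 1) = mon (a-1) (e - n) := by
  ext j
  rw [Finsupp.tsub_apply]
  fin_cases j <;> simp [mon, Finsupp.single_apply]

lemma mon_eq_single (a e n : ℕ) : (Finsupp.single (0 : Fin 2) n = mon a e) ↔ (n = a ∧ e = 0) := by
  constructor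
  · intro h
    have h0 := congrArg (fun v : Fin 2 →₀ ℕ => v 0) h
    have h1 := congrArg (fun v : Fin 2 →₀ ℕ => v 1) h
    simp only [mon_apply0, mon_apply1] at h0 h1
    constructor
    · simpa [Finsupp.single_apply] using h0
    · have : Finsupp.single (0 : Fin 2) n 1 = 0 := by simp [Finsupp.single_apply]
      omega
  · rintro ⟨rfl, rfl⟩
    simp [mon]

end Helpers


-- coeff of pderiv
lemma my_coeff_pderiv {R σ : Type*} [CommSemiring R] [DecidableEq σ] (i : σ) (m : σ →₀ ℕ)
    (f : MvPolynomial σ R) :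
    coeff m (pderiv i f) = ((m i + 1 : ℕ) : R) * coeff (m + Finsupp.single i 1) f := by
  induction f using MvPolynomial.induction_on' with
  | add p q hp hq => simp [hp, hq, mul_add]
  | monomial s r =>
    rw [pderiv_monomial, coeff_monomial, coeff_monomial]
    by_cases h2 : s = m + Finsupp.single i 1
    · subst h2
      rw [if_pos (add_tsub_cancel_right _ _)]
      simp [Finsupp.add_apply, Finsupp.single_eq_same, mul_comm]
    · rw [if_neg h2]
      by_cases h0 : s i = 0
      · split_ifs <;> simp [h0]
      · have hle : Finsupp.single i 1 ≤ s :=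
          Finsupp.single_le_iff.mpr (Nat.one_le_iff_ne_zero.mpr h0)
        have hne : s - Finsupp.single i 1 ≠ m := by
          intro h
          exact h2 (by rw [← h, tsub_add_cancel_of_le hle])
        rw [if_neg hne, mul_zero]


/-- For `d = y^{m1} ∂_x + (1 + y^{m2} x) ∂_y` on `k[x,y]` with `m2 ∤ m1`,
if `d f = g(x)` for some `g ∈ k[x]` then `f` is constant and `g = 0`. -/
theorem stmt0 (k : Type*) [Field k] [CharZero k]
    (m1 m2 : ℕ) (hm1 : 0 < m1) (hm2 : 0 < m2) (hdvd : ¬ m2 ∣ m1)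
    (d : Derivation k (MvPolynomial (Fin 2) k) (MvPolynomial (Fin 2) k))
    (hdx : d (X 0) = X 1 ^ m1)
    (hdy : d (X 1) = 1 + X 1 ^ m2 * X 0)
    (f : MvPolynomial (Fin 2) k) (g : Polynomial k)
    (hf : d f = Polynomial.aeval (X 0 : MvPolynomial (Fin 2) k) g) :
    (∃ c : k, f = C c) ∧ g = 0 := by
  classical
  -- the PDE
  have hD : d f = X 1 ^ m1 * pderiv 0 f + (1 + X 1 ^ m2 * X 0) * pderiv 1 f := by
    have hd : d = (X 1 ^ m1 : MvPolynomial (Fin 2) k) • (pderiv 0)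
        + ((1 : MvPolynomial (Fin 2) k) + X 1 ^ m2 * X 0) • (pderiv 1) := by
      apply derivation_ext
      intro i
      fin_cases i
      · simp [hdx, Derivation.add_apply, Derivation.smul_apply]
      · simp [hdy, Derivation.add_apply, Derivation.smul_apply]
    rw [hd, Derivation.add_apply, Derivation.smul_apply, Derivation.smul_apply,
      smul_eq_mul, smul_eq_mul]
  have hPDE : X 1 ^ m1 * pderiv 0 f + pderiv 1 f + (X 1 ^ m2 * X 0) * pderiv 1 f
      = Polynomial.aeval (X 0 : MvPolynomial (Fin 2) k) g := by
    rw [← hf, hD]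
    ring
  set c : ℕ → ℕ → k := fun a e => coeff (mon a e) f with hc
  -- coefficient computations
  have hT1 : ∀ a e : ℕ, coeff (mon a e) (X 1 ^ m1 * pderiv 0 f)
      = if m1 ≤ e then ((a + 1 : ℕ) : k) * c (a+1) (e - m1) else 0 := by
    intro a e
    rw [X_pow_eq_monomial, coeff_monomial_mul']
    by_cases hm : m1 ≤ e
    · rw [if_pos ((mon_le1 a e m1).mpr hm), if_pos hm, one_mul, mon_sub1,
        my_coeff_pderiv, mon_apply0, mon_add0]
    · rw [if_neg (fun hcon => hm ((mon_le1 a e m1).mp hcon)), if_neg hm]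
  have hT2 : ∀ a e : ℕ, coeff (mon a e) (pderiv 1 f) = ((e + 1 : ℕ) : k) * c a (e+1) := by
    intro a e
    rw [my_coeff_pderiv, mon_apply1, mon_add1]
  have hT3 : ∀ a e : ℕ, coeff (mon a e) ((X 1 ^ m2 * X 0) * pderiv 1 f)
      = if 1 ≤ a ∧ m2 ≤ e then ((e - m2 + 1 : ℕ) : k) * c (a-1) (e - m2 + 1) else 0 := by
    intro a e
    have hX : (X 1 ^ m2 * X 0 : MvPolynomial (Fin 2) k)
        = monomial (Finsupp.single 1 m2 + Finsupp.single 0 1) 1 := by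
      rw [show (X 0 : MvPolynomial (Fin 2) k) = X 0 ^ 1 from (pow_one _).symm,
        X_pow_eq_monomial, X_pow_eq_monomial, monomial_mul, mul_one]
    rw [hX, coeff_monomial_mul']
    by_cases hcond : 1 ≤ a ∧ m2 ≤ e
    · rw [if_pos ((mon_le2 a e m2).mpr hcond), if_pos hcond, one_mul, mon_sub2,
        my_coeff_pderiv, mon_apply1, mon_add1]
    · rw [if_neg (fun hcon => hcond ((mon_le2 a e m2).mp hcon)), if_neg hcond]
  have hrhs : ∀ a e : ℕ, coeff (mon a e) (Polynomial.aeval (X 0 : MvPolynomial (Fin 2) k) g)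
      = if e = 0 then g.coeff a else 0 := by
    intro a e
    rw [Polynomial.aeval_def, Polynomial.eval₂_eq_sum, Polynomial.sum_def, coeff_sum]
    simp_rw [MvPolynomial.algebraMap_eq]
    have hterm : ∀ n ∈ g.support, coeff (mon a e) (C (g.coeff n) * X 0 ^ n)
        = if n = a ∧ e = 0 then g.coeff n else 0 := by
      intro n _
      rw [coeff_C_mul, X_pow_eq_monomial, coeff_monomial]
      by_cases hcc : n = a ∧ e = 0
      · rw [if_pos ((mon_eq_single a e n).mpr hcc), if_pos hcc, mul_one]
      · rw [if_neg (fun hcon => hcc ((mon_eq_single a e n).mp hcon)), if_neg hcc, mul_zero]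
    rw [Finset.sum_congr rfl hterm]
    by_cases he : e = 0
    · subst he
      simp only [and_true, if_true]
      rw [Finset.sum_ite_eq' g.support a (fun n => g.coeff n)]
      split_ifs with ha
      · rfl
      · exact (Polynomial.notMem_support_iff.mp ha).symm
    · simp [he]
  -- the scalar recurrence
  have hstar : ∀ a e : ℕ,
      (if m1 ≤ e then ((a + 1 : ℕ) : k) * c (a+1) (e - m1) else 0)
      + ((e + 1 : ℕ) : k) * c a (e+1)
      + (if 1 ≤ a ∧ m2 ≤ e then ((e - m2 + 1 : ℕ) : k) * c (a-1) (e - m2 + 1) else 0)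
      = if e = 0 then g.coeff a else 0 := by
    intro a e
    rw [← hT1, ← hT2, ← hT3, ← hrhs, ← coeff_add, ← coeff_add, hPDE]
  have hN : ∀ a e, degreeOf 0 f + 1 ≤ a → c a e = 0 := by
    intro a e ha
    by_contra hne
    have hmem : mon a e ∈ f.support := mem_support_iff.mpr hne
    have := monomial_le_degreeOf 0 hmem
    rw [mon_apply0] at this
    omega
  obtain ⟨hall, hg⟩ := scalar_main m1 m2 hm1 hm2 hdvd c (fun a => g.coeff a)
    (degreeOf 0 f + 1) hN hstar
  constructor
  · refine ⟨coeff 0 f, ?_⟩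
    apply MvPolynomial.ext
    intro m
    have hm : m = mon (m 0) (m 1) := by
      ext j
      fin_cases j <;> simp [mon, Finsupp.single_apply]
    rw [coeff_C]
    by_cases h0 : (0 : Fin 2 →₀ ℕ) = m
    · rw [if_pos h0, ← h0]
    · rw [if_neg h0, hm]
      apply hall
      rintro ⟨ha, he⟩
      apply h0
      ext j
      rw [hm]
      fin_cases j <;> simp [ha, he, mon, Finsupp.single_apply]
  · apply Polynomial.ext
    intro n
    rw [Polynomial.coeff_zero]
    exact hg n
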